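/- Let n ≥ 1 be a natural number and let s be a real number with (1 - 1/√2)·2^n < s ≤ 2^{n-1} - 1. Then 4^n / (2·((2^n - s)² + s²)) ≤ 1 - 1/(4^{n-1} + 1). -/

import Mathlib

theorem stmt_4 (n : ℕ) (hn : 1 ≤ n) (s : ℝ)
    (hs1 : (1 - 1 / Real.sqrt 2) * 2 ^ n < s) (hs2 : s ≤ (2 : ℝ) ^ (n - 1) - 1) :
    (4 : ℝ) ^ n / (2 * (((2 : ℝ) ^ n - s) ^ 2 + s ^ 2)) ≤
      1 - 1 / ((4 : ℝ) ^ (n - 1) + 1) := by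
  obtain ⟨k, rfl⟩ : ∃ k, n = k + 1 := ⟨n - 1, (Nat.succ_pred_eq_of_pos hn).symm⟩
  simp only [Nat.add_sub_cancel] at hs2 ⊢
  set m : ℝ := 2 ^ k with hm
  have h2 : (2:ℝ) ^ (k + 1) = 2 * m := by rw [pow_succ]; ring
  have h4 : (4:ℝ) ^ (k + 1) = 4 * m ^ 2 := by
    have : (4:ℝ) = 2 ^ 2 := by norm_num
    rw [this, ← pow_mul, hm, ← pow_mul]; ring_nf
  have h4k : (4:ℝ) ^ k = m ^ 2 := by
    have : (4:ℝ) = 2 ^ 2 := by norm_num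
    rw [this, ← pow_mul, hm, ← pow_mul]; ring_nf
  rw [h2, h4, h4k]
  have ht : 1 ≤ m - s := by linarith
  have hden : 4 * (m ^ 2 + 1) ≤ 2 * ((2 * m - s) ^ 2 + s ^ 2) := by
    nlinarith [sq_nonneg (m - s - 1), ht]
  have hpos : (0:ℝ) < m ^ 2 + 1 := by positivity
  have hD : (0:ℝ) < 2 * ((2 * m - s) ^ 2 + s ^ 2) := by linarith
  rw [show (1:ℝ) - 1 / (m ^ 2 + 1) = m ^ 2 / (m ^ 2 + 1) from by field_simp; ring]
  rw [div_le_div_iff₀ hD hpos]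
  nlinarith [mul_le_mul_of_nonneg_left hden (sq_nonneg m)]
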